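/- Let S be a regular (T₃) topological semigroup such that S × S is countably compact. Then the projection π : H(S) → E(S), π(x) = x·x⁻¹, is continuous. -/

import Mathlib

open Filter Topology

variable {S : Type*}

/-- `spow x n` is `x ^ n` for `n ≥ 1` in a semigroup (with junk value `x` at `0`). -/
def spow {S : Type*} [Mul S] (x : S) : ℕ → S
  | 0 => x
  | 1 => x
  | n + 2 => spow x (n + 1) * x

/-- An element of a topological semigroup is topologically periodic if every open
neighbourhood of `x` contains `x ^ n` for some `n ≥ 2`. -/
def TopPeriodic {S : Type*} [Mul S] [TopologicalSpace S] (x : S) : Prop :=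
  ∀ U : Set S, IsOpen U → x ∈ U → ∃ n : ℕ, 2 ≤ n ∧ spow x n ∈ U

/-- The Clifford part `H(S)` of a semigroup: the union of all maximal subgroups. -/
def HSet (S : Type*) [Mul S] : Set S :=
  {x | ∃ y, x * y = y * x ∧ x * y * x = x ∧ y * x * y = y}

/-- The maximal subgroup `H(e)` of a semigroup with identity the idempotent `e`. -/
def Hgrp (S : Type*) [Mul S] (e : S) : Set S :=
  {x | ∃ y, x * y = e ∧ y * x = e ∧ x * e = x ∧ e * x = x ∧ y * e = y ∧ e * y = y}

/-- `inv` is the inversion map on the Clifford part `H(S)`: it sends each element of a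
maximal subgroup to its (unique) commuting inverse. -/
def IsInvMap (S : Type*) [Mul S] (inv : S → S) : Prop :=
  ∀ x ∈ HSet S, x * inv x = inv x * x ∧ x * inv x * x = x ∧ inv x * x * inv x = inv x

/-- A topological space is countably compact if every countable open cover admits a
finite subcover. -/
def CountablyCompactSpace' (X : Type*) [TopologicalSpace X] : Prop :=
  ∀ U : ℕ → Set X, (∀ n, IsOpen (U n)) → (⋃ n, U n) = Set.univ →
    ∃ F : Finset ℕ, (⋃ n ∈ F, U n) = Set.univ

/-- A subset of a topological space is countably compact (as a subspace) if every
countable cover by open sets of the ambient space admits a finite subcover. -/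
def CountablyCompactIn {X : Type*} [TopologicalSpace X] (A : Set X) : Prop :=
  ∀ U : ℕ → Set X, (∀ n, IsOpen (U n)) → A ⊆ ⋃ n, U n →
    ∃ F : Finset ℕ, A ⊆ ⋃ n ∈ F, U n

/-- A topological space is pseudocompact if every continuous real-valued function on it
is bounded. -/
def Pseudocompact (X : Type*) [TopologicalSpace X] : Prop :=
  ∀ f : X → ℝ, Continuous f → ∃ M : ℝ, ∀ x, |f x| ≤ M

/-! ### Auxiliary algebraic lemmas about `spow` -/

section SpowAlg

variable [Semigroup S]

lemma spow_succ (x : S) {n : ℕ} (hn : 1 ≤ n) : spow x (n + 1) = spow x n * x := by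
  cases n with
  | zero => omega
  | succ m => rfl

lemma spow_succ_left (x : S) : ∀ n : ℕ, 1 ≤ n → spow x (n + 1) = x * spow x n := by
  intro n hn
  induction n, hn using Nat.le_induction with
  | base => rfl
  | succ n hn ih =>
    calc spow x (n + 1 + 1) = spow x (n + 1) * x := spow_succ x (by omega)
      _ = (x * spow x n) * x := by rw [ih]
      _ = x * (spow x n * x) := mul_assoc _ _ _
      _ = x * spow x (n + 1) := by rw [← spow_succ x hn]

lemma spow_add (x : S) {m : ℕ} (hm : 1 ≤ m) : ∀ n : ℕ, 1 ≤ n →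
    spow x (m + n) = spow x m * spow x n := by
  intro n hn
  induction n, hn using Nat.le_induction with
  | base => rw [spow_succ x hm]; rfl
  | succ n hn ih =>
    have h : m + (n + 1) = (m + n) + 1 := by omega
    rw [h, spow_succ x (by omega : 1 ≤ m + n), ih, mul_assoc, ← spow_succ x hn]

lemma spow_pow (x : S) {n : ℕ} (hn : 1 ≤ n) : ∀ m : ℕ, 1 ≤ m →
    spow (spow x n) m = spow x (n * m) := by
  intro m hm
  induction m, hm using Nat.le_induction with
  | base => rw [Nat.mul_one]; rfl
  | succ m hm ih =>
    have h1 : 1 ≤ n * m := Nat.one_le_iff_ne_zero.mpr (by positivity)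
    rw [spow_succ _ hm, ih, show n * (m + 1) = n * m + n by ring, spow_add x h1 n hn]

variable {a b : S}

lemma cinv_idem (h1 : a * b * a = a) : (a * b) * (a * b) = a * b := by
  rw [← mul_assoc, h1]

lemma fabs_ar (hc : a * b = b * a) (h1 : a * b * a = a) : a * (a * b) = a := by
  rw [hc, ← mul_assoc, h1]

lemma fabs_bl (hc : a * b = b * a) (h2 : b * a * b = b) : (a * b) * b = b := by
  rw [hc]; rw [mul_assoc] at h2 ⊢; exact h2

lemma fabs_br (h2 : b * a * b = b) : b * (a * b) = b := by
  rw [← mul_assoc]; exact h2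

lemma habs_pa (h1 : a * b * a = a) : ∀ n : ℕ, 1 ≤ n → (a * b) * spow a n = spow a n := by
  intro n hn
  induction n, hn using Nat.le_induction with
  | base => exact h1
  | succ n hn ih => rw [spow_succ a hn, ← mul_assoc, ih]

lemma habs_ap (hc : a * b = b * a) (h1 : a * b * a = a) :
    ∀ n : ℕ, 1 ≤ n → spow a n * (a * b) = spow a n := by
  intro n hn
  induction n, hn using Nat.le_induction with
  | base => exact fabs_ar hc h1
  | succ n hn ih => rw [spow_succ a hn, mul_assoc, fabs_ar hc h1]

lemma habs_pb (hc : a * b = b * a) (h2 : b * a * b = b) :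
    ∀ n : ℕ, 1 ≤ n → (a * b) * spow b n = spow b n := by
  intro n hn
  induction n, hn using Nat.le_induction with
  | base => exact fabs_bl hc h2
  | succ n hn ih => rw [spow_succ b hn, ← mul_assoc, ih]

lemma powmul (hc : a * b = b * a) (h1 : a * b * a = a) (h2 : b * a * b = b) :
    ∀ n : ℕ, 1 ≤ n → spow a n * spow b n = a * b := by
  intro n hn
  induction n, hn using Nat.le_induction with
  | base => rfl
  | succ n hn ih =>
    rw [spow_succ_left a n hn, spow_succ b hn, mul_assoc, ← mul_assoc (spow a n), ih,
      fabs_bl hc h2]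

lemma powmul' (hc : a * b = b * a) (h1 : a * b * a = a) (h2 : b * a * b = b) :
    ∀ n : ℕ, 1 ≤ n → spow b n * spow a n = a * b := by
  intro n hn
  have := powmul (a := b) (b := a) hc.symm h2 h1 n hn
  rw [hc]; exact this

/-- `b^i * a^(j+i) = a^j`. -/
lemma powsub (hc : a * b = b * a) (h1 : a * b * a = a) (h2 : b * a * b = b) :
    ∀ i : ℕ, 1 ≤ i → ∀ j : ℕ, 1 ≤ j → spow b i * spow a (j + i) = spow a j := by
  intro i hi
  induction i, hi using Nat.le_induction with
  | base =>
    intro j hj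
    show b * spow a (j + 1) = spow a j
    rw [spow_succ_left a j hj, ← mul_assoc, ← hc]
    exact habs_pa h1 j hj
  | succ i hi ih =>
    intro j hj
    rw [spow_succ_left b i hi, show j + (i + 1) = (j + 1) + i by omega, mul_assoc,
      ih (j + 1) (by omega), spow_succ_left a j hj, ← mul_assoc, ← hc]
    exact habs_pa h1 j hj

lemma uniq {a b c : S} (hc1 : a * b = b * a) (h1 : a * b * a = a)
    (hc2 : a * c = c * a) (h4 : a * c * a = a) : a * b = a * c := by
  have e1 : a * (a * b) = a := fabs_ar hc1 h1
  calc a * b = ((a * c) * a) * b := by rw [h4]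
    _ = (a * c) * (a * b) := by rw [mul_assoc]
    _ = (c * a) * (a * b) := by rw [hc2]
    _ = c * (a * (a * b)) := by rw [mul_assoc]
    _ = c * a := by rw [e1]
    _ = a * c := hc2.symm

end SpowAlg

/-! ### Topological auxiliary lemmas -/

section SpowTop

lemma continuous_spow [Mul S] [TopologicalSpace S] [ContinuousMul S] :
    ∀ n : ℕ, Continuous fun z : S => spow z n
  | 0 => continuous_id
  | 1 => continuous_id
  | (n + 2) => by
      show Continuous fun z : S => spow z (n + 1) * z
      exact (continuous_spow (n + 1)).mul continuous_id

/-- Every sequence in a countably compact space has a cluster point. -/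
lemma exists_cluster {X : Type*} [TopologicalSpace X] (hX : CountablyCompactSpace' X)
    (c : ℕ → X) : ∃ p : X, ∀ k, p ∈ closure (c '' Set.Ici k) := by
  by_contra hcon
  push_neg at hcon
  obtain ⟨F, hF⟩ := hX (fun n => (closure (c '' Set.Ici n))ᶜ)
    (fun n => isClosed_closure.isOpen_compl)
    (by
      apply Set.eq_univ_of_forall
      intro p
      obtain ⟨k, hk⟩ := hcon p
      exact Set.mem_iUnion.mpr ⟨k, hk⟩)
  have hmem : c (F.sup id) ∈ ⋃ n ∈ F, (closure (c '' Set.Ici n))ᶜ := by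
    rw [hF]; trivial
  simp only [Set.mem_iUnion] at hmem
  obtain ⟨n, hnF, hn⟩ := hmem
  exact hn (subset_closure ⟨F.sup id, Finset.le_sup (f := id) hnF, rfl⟩)

lemma mem_closure_image_of {X Y : Type*} [TopologicalSpace X] [TopologicalSpace Y]
    {f : X → Y} (hf : Continuous f) {A : Set X} {p : X} (hp : p ∈ closure A) :
    f p ∈ closure (f '' A) :=
  image_closure_subset_closure_image hf ⟨p, hp, rfl⟩

/-- Key lemma: for `z` in the Clifford part of a semigroup whose square is countably
compact, the idempotent `z * z⁻¹` lies in the closure of the set of powers of `z`. -/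
lemma key_pi_mem [Semigroup S] [TopologicalSpace S] [ContinuousMul S] [T2Space S]
    (hcc : CountablyCompactSpace' (S × S)) (inv : S → S) (hinv : IsInvMap S inv)
    {z : S} (hz : z ∈ HSet S) :
    z * inv z ∈ closure ((fun m => spow z m) '' Set.Ici 1) := by
  obtain ⟨hc, h1, h2⟩ := hinv z hz
  set t := inv z with ht
  set c : ℕ → S × S := fun m => (spow z (m + 1), spow t (m + 1)) with hcdef
  obtain ⟨p, hp⟩ := exists_cluster hcc c
  set P := closure ((fun m => spow z m) '' Set.Ici 1) with hP
  -- the product of the cluster point is `z * t`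
  have hvu : p.2 * p.1 = z * t := by
    have hcl : IsClosed {q : S × S | q.2 * q.1 = z * t} :=
      isClosed_eq (continuous_snd.mul continuous_fst) continuous_const
    refine hcl.closure_subset_iff.mpr ?_ (hp 0)
    rintro _ ⟨m, -, rfl⟩
    exact powmul' hc h1 h2 (m + 1) (by omega)
  -- first coordinate is in the closure of deep tails of powers of `z`
  have hu : ∀ i : ℕ, p.1 ∈ closure ((fun m => spow z m) '' Set.Ici (i + 1)) := by
    intro i
    have h1' := mem_closure_image_of continuous_fst (hp i)
    refine closure_mono ?_ h1'
    rintro _ ⟨_, ⟨m, hm, rfl⟩, rfl⟩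
    exact ⟨m + 1, by simpa using Nat.add_le_add_right hm 1, rfl⟩
  have hv : p.2 ∈ closure ((fun m => spow t m) '' Set.Ici 1) := by
    have h2' := mem_closure_image_of continuous_snd (hp 0)
    refine closure_mono ?_ h2'
    rintro _ ⟨_, ⟨m, hm, rfl⟩, rfl⟩
    exact ⟨m + 1, Set.mem_Ici.mpr (by omega), rfl⟩
  -- multiplying the first coordinate by powers of `t` stays in `P`
  have hstep : ∀ i : ℕ, 1 ≤ i → spow t i * p.1 ∈ P := by
    intro i hi
    have hmap := mem_closure_image_of (f := fun u => spow t i * u)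
      (continuous_const.mul continuous_id) (hu i)
    have himg : (fun u => spow t i * u) '' ((fun m => spow z m) '' Set.Ici (i + 1)) ⊆
        (fun m => spow z m) '' Set.Ici 1 := by
      rintro _ ⟨_, ⟨m, hm, rfl⟩, rfl⟩
      have hm' : i + 1 ≤ m := hm
      obtain ⟨j, rfl⟩ : ∃ j, m = j + i := ⟨m - i, by omega⟩
      exact ⟨j, Set.mem_Ici.mpr (by omega), (powsub hc h1 h2 i hi j (by omega)).symm⟩
    exact closure_mono himg hmap
  -- conclude
  rw [← hvu]
  have hmap := mem_closure_image_of (f := fun v => v * p.1)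
    (continuous_id.mul continuous_const) hv
  have himg : (fun v => v * p.1) '' ((fun m => spow t m) '' Set.Ici 1) ⊆ P := by
    rintro _ ⟨_, ⟨i, hi, rfl⟩, rfl⟩
    exact hstep i hi
  exact (isClosed_closure.closure_subset_iff.mpr himg) hmap

end SpowTop

theorem stmt8 [Semigroup S] [TopologicalSpace S] [ContinuousMul S] [T3Space S]
    (hcc : CountablyCompactSpace' (S × S))
    (inv : S → S) (hinv : IsInvMap S inv) :
    ContinuousOn (fun x => x * inv x) (HSet S) := by
  intro x hx
  obtain ⟨hcx, h1x, h2x⟩ := hinv x hx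
  by_contra hcont
  have hnt : ¬ Tendsto (fun w : S => w * inv w) (𝓝[HSet S] x) (𝓝 (x * inv x)) := hcont
  rw [tendsto_def] at hnt
  push_neg at hnt
  obtain ⟨O, hO, hnotin⟩ := hnt
  -- selection principle from the discontinuity
  have hsel0 : ∀ U : Set S, IsOpen U → x ∈ U →
      ∃ w, w ∈ U ∧ w ∈ HSet S ∧ w * inv w ∉ O := by
    intro U hU hxU
    by_contra hno
    push_neg at hno
    apply hnotin
    rw [mem_nhdsWithin]
    exact ⟨U, hU, hxU, fun w hw => hno w hw.1 hw.2⟩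
  -- the idempotent e and the shrunken neighbourhoods
  have hee : (x * inv x) * (x * inv x) = x * inv x := cinv_idem h1x
  set O' := interior O with hO'def
  have hO'open : IsOpen O' := isOpen_interior
  have heO' : x * inv x ∈ O' := mem_interior_iff_mem_nhds.mpr hO
  obtain ⟨C, hCn, hCc, hCsub⟩ := exists_mem_nhds_isClosed_subset (hO'open.mem_nhds heO')
  set O₁ := interior C with hO₁def
  have hO₁open : IsOpen O₁ := isOpen_interior
  have heO₁ : x * inv x ∈ O₁ := mem_interior_iff_mem_nhds.mpr hCn
  have hclO₁ : closure O₁ ⊆ O' := (closure_minimal interior_subset hCc).trans hCsub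
  -- squaring neighbourhoods
  have hsq : ∀ V : Set S, IsOpen V → x * inv x ∈ V →
      ∃ V' : Set S, IsOpen V' ∧ x * inv x ∈ V' ∧ V' ⊆ V ∧
        ∀ p ∈ V', ∀ q ∈ V', p * q ∈ V := by
    intro V hV heV
    have hVn : V ∈ 𝓝 ((x * inv x) * (x * inv x)) := by rw [hee]; exact hV.mem_nhds heV
    have hpre : (fun p : S × S => p.1 * p.2) ⁻¹' V ∈ 𝓝 ((x * inv x, x * inv x) : S × S) :=
      (continuous_mul.continuousAt).preimage_mem_nhds hVn
    rw [mem_nhds_prod_iff'] at hpre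
    obtain ⟨u, v, hu, hxu, hv, hxv, huv⟩ := hpre
    refine ⟨u ∩ v ∩ V, (hu.inter hv).inter hV, ⟨⟨hxu, hxv⟩, heV⟩,
      Set.inter_subset_right, ?_⟩
    intro p hp q hq
    exact huv (Set.mk_mem_prod hp.1.1 hq.1.2)
  -- chain of neighbourhoods of e
  obtain ⟨W, hW0, hWopen, hWe, hWdec, hWmul⟩ :
      ∃ W : ℕ → Set S, W 0 = O₁ ∧ (∀ k, IsOpen (W k)) ∧ (∀ k, x * inv x ∈ W k) ∧
        (∀ k, W (k + 1) ⊆ W k) ∧ ∀ k, ∀ p ∈ W (k + 1), ∀ q ∈ W (k + 1), p * q ∈ W k := by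
    have hstep : ∀ V : {V : Set S // IsOpen V ∧ x * inv x ∈ V},
        ∃ V' : {V : Set S // IsOpen V ∧ x * inv x ∈ V},
          V'.1 ⊆ V.1 ∧ ∀ p ∈ V'.1, ∀ q ∈ V'.1, p * q ∈ V.1 := by
      rintro ⟨V, hV, heV⟩
      obtain ⟨V', hV'1, hV'2, hV'3, hV'4⟩ := hsq V hV heV
      exact ⟨⟨V', hV'1, hV'2⟩, hV'3, hV'4⟩
    choose g hg1 hg2 using hstep
    refine ⟨fun n => (g^[n] ⟨O₁, hO₁open, heO₁⟩).1, rfl,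
      fun k => (g^[k] _).2.1, fun k => (g^[k] _).2.2, fun k => ?_, fun k => ?_⟩
    · simp only [Function.iterate_succ_apply']
      exact hg1 _
    · simp only [Function.iterate_succ_apply']
      exact hg2 _
  have hWanti : ∀ i j : ℕ, i ≤ j → W j ⊆ W i := by
    intro i j hij
    obtain ⟨d, rfl⟩ := Nat.exists_eq_add_of_le hij
    induction d with
    | zero => exact subset_rfl
    | succ d ih => exact (hWdec (i + d)).trans (ih (by omega))
  -- power descent along the chain
  have hdesc : ∀ k : ℕ, ∀ a : S, a ∈ W k → ∀ j, j ≤ k → spow a (j + 1) ∈ W (k - j) := by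
    intro k a ha j
    induction j with
    | zero => intro _; simpa [spow] using ha
    | succ j ih =>
      intro hjk
      have hj : spow a (j + 1) ∈ W (k - j) := ih (by omega)
      have hkj : k - j = (k - (j + 1)) + 1 := by omega
      rw [hkj] at hj
      have ha' : a ∈ W ((k - (j + 1)) + 1) := hWanti _ k (by omega) ha
      have hmul := hWmul (k - (j + 1)) _ hj _ ha'
      rw [spow_succ a (by omega : 1 ≤ j + 1)]
      exact hmul
  -- e is in the closure of the powers of x
  have hxcl : x * inv x ∈ closure ((fun m => spow x m) '' Set.Ici 1) :=
    key_pi_mem hcc inv hinv hx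
  -- construct the sequence ζ
  have hsel : ∀ k : ℕ, ∃ ζ : S, ζ ∈ HSet S ∧
      (∀ m, 1 ≤ m → m ≤ k → spow ζ m ∈ O₁) ∧ ζ * inv ζ ∉ O := by
    intro k
    obtain ⟨y, hyW, n, hn, rfl⟩ :=
      mem_closure_iff.mp hxcl (W k) (hWopen k) (hWe k)
    have hn1 : 1 ≤ n := hn
    -- the open set of candidates
    have hDopen : IsOpen (⋂ m ∈ Finset.Icc 1 k, (fun w : S => spow w (n * m)) ⁻¹' O₁) :=
      isOpen_biInter_finset (fun m _ => hO₁open.preimage (continuous_spow (n * m)))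
    have hxD : x ∈ ⋂ m ∈ Finset.Icc 1 k, (fun w : S => spow w (n * m)) ⁻¹' O₁ := by
      refine Set.mem_iInter₂.mpr fun m hm => ?_
      obtain ⟨hm1, hmk⟩ := Finset.mem_Icc.mp hm
      simp only [Set.mem_preimage]
      rw [← spow_pow x hn1 m hm1]
      have hd := hdesc k (spow x n) hyW (m - 1) (by omega)
      rw [show (m - 1) + 1 = m by omega] at hd
      have hd0 : spow (spow x n) m ∈ W 0 := hWanti 0 _ (by omega) hd
      rwa [hW0] at hd0
    obtain ⟨z, hzD, hzH, hzO⟩ := hsel0 _ hDopen hxD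
    obtain ⟨hcz, h1z, h2z⟩ := hinv z hzH
    have hwit1 : spow z n * spow (inv z) n = spow (inv z) n * spow z n :=
      (powmul hcz h1z h2z n hn1).trans (powmul' hcz h1z h2z n hn1).symm
    have hwit2 : spow z n * spow (inv z) n * spow z n = spow z n := by
      rw [powmul hcz h1z h2z n hn1]
      exact habs_pa h1z n hn1
    have hwit3 : spow (inv z) n * spow z n * spow (inv z) n = spow (inv z) n := by
      rw [powmul' hcz h1z h2z n hn1]
      exact habs_pb hcz h2z n hn1
    have hζH : spow z n ∈ HSet S := ⟨spow (inv z) n, hwit1, hwit2, hwit3⟩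
    obtain ⟨hcζ, h1ζ, h2ζ⟩ := hinv (spow z n) hζH
    have hun : spow z n * spow (inv z) n = spow z n * inv (spow z n) :=
      uniq hwit1 hwit2 hcζ h1ζ
    refine ⟨spow z n, hζH, ?_, ?_⟩
    · intro m hm1 hmk
      rw [spow_pow z hn1 m hm1]
      exact Set.mem_iInter₂.mp hzD m (Finset.mem_Icc.mpr ⟨hm1, hmk⟩)
    · rw [← hun, powmul hcz h1z h2z n hn1]
      exact hzO
  choose ζ hζH hζpow hζO using hsel
  -- cluster point of the graph of the inversion along ζ
  obtain ⟨p, hp⟩ := exists_cluster hcc (fun k => ((ζ k, inv (ζ k)) : S × S))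
  have hr1 : p.1 * p.2 = p.2 * p.1 := by
    have hcl : IsClosed {q : S × S | q.1 * q.2 = q.2 * q.1} :=
      isClosed_eq (continuous_fst.mul continuous_snd) (continuous_snd.mul continuous_fst)
    refine hcl.closure_subset_iff.mpr ?_ (hp 0)
    rintro _ ⟨k, -, rfl⟩
    exact (hinv (ζ k) (hζH k)).1
  have hr2 : p.1 * p.2 * p.1 = p.1 := by
    have hcl : IsClosed {q : S × S | q.1 * q.2 * q.1 = q.1} :=
      isClosed_eq ((continuous_fst.mul continuous_snd).mul continuous_fst) continuous_fst
    refine hcl.closure_subset_iff.mpr ?_ (hp 0)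
    rintro _ ⟨k, -, rfl⟩
    exact (hinv (ζ k) (hζH k)).2.1
  have hr3 : p.2 * p.1 * p.2 = p.2 := by
    have hcl : IsClosed {q : S × S | q.2 * q.1 * q.2 = q.2} :=
      isClosed_eq ((continuous_snd.mul continuous_fst).mul continuous_snd) continuous_snd
    refine hcl.closure_subset_iff.mpr ?_ (hp 0)
    rintro _ ⟨k, -, rfl⟩
    exact (hinv (ζ k) (hζH k)).2.2
  have hpH : p.1 ∈ HSet S := ⟨p.2, hr1, hr2, hr3⟩
  obtain ⟨hcp, h1p, h2p⟩ := hinv p.1 hpH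
  have huniq : p.1 * p.2 = p.1 * inv p.1 := uniq hr1 hr2 hcp h1p
  -- the limit idempotent is outside O'
  have hnotO' : p.1 * p.2 ∉ O' := by
    have hmap := mem_closure_image_of (f := fun q : S × S => q.1 * q.2)
      (continuous_fst.mul continuous_snd) (hp 0)
    have hsub : (fun q : S × S => q.1 * q.2) ''
        ((fun k => ((ζ k, inv (ζ k)) : S × S)) '' Set.Ici 0) ⊆ O'ᶜ := by
      rintro _ ⟨_, ⟨k, -, rfl⟩, rfl⟩
      exact fun hmem => hζO k (interior_subset hmem)
    exact (hO'open.isClosed_compl.closure_subset_iff.mpr hsub) hmap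
  -- but all powers of the limit lie in the closure of O₁
  have hpow : ∀ m : ℕ, 1 ≤ m → spow p.1 m ∈ closure O₁ := by
    intro m hm
    have htail : p.1 ∈ closure (ζ '' Set.Ici m) := by
      have hmap := mem_closure_image_of continuous_fst (hp m)
      refine closure_mono ?_ hmap
      rintro _ ⟨_, ⟨k, hk, rfl⟩, rfl⟩
      exact ⟨k, hk, rfl⟩
    have hmapped := mem_closure_image_of (continuous_spow m) htail
    refine (isClosed_closure.closure_subset_iff.mpr ?_) hmapped
    rintro _ ⟨_, ⟨k, hk, rfl⟩, rfl⟩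
    exact subset_closure (hζpow k m hm hk)
  -- final contradiction via the key lemma
  have hfin : p.1 * inv p.1 ∈ closure O₁ := by
    have hk := key_pi_mem hcc inv hinv hpH
    refine (isClosed_closure.closure_subset_iff.mpr ?_) hk
    rintro _ ⟨m, hm, rfl⟩
    exact hpow m hm
  rw [← huniq] at hfin
  exact hnotO' (hclO₁ hfin)
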